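/- Let F : EuclideanSpace ℝ (Fin E) → ℝ be differentiable with L-Lipschitz gradient (L > 0), and let S : Fin n → Finset (Fin E) be a set system (each S i nonempty, every coordinate in exactly two sets). For each i let ℓ_i ∈ S i be an index maximizing ((∇F(λ))_ℓ)² over ℓ ∈ S i. Then the expected progress of the set-wise Gauss-Southwell step satisfies (1/n)·Σ_{i : Fin n} F(λ − (1/L)·(∇F(λ))_{ℓ_i} • e_{ℓ_i}) ≤ F(λ) − (1/(2·L·n))·Σ_{i : Fin n} max_{ℓ ∈ S i} ((∇F(λ))_ℓ)². -/

import Mathlib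

open InnerProductSpace

variable {H : Type*} [NormedAddCommGroup H] [InnerProductSpace ℝ H] [CompleteSpace H]

lemma fderiv_apply_eq_inner_gradient (F : H → ℝ) (hdiff : Differentiable ℝ F) (x v : H) :
    fderiv ℝ F x v = ⟪gradient F x, v⟫_ℝ := by
  have h := (hdiff x).hasGradientAt
  rw [hasGradientAt_iff_hasFDerivAt] at h
  rw [h.fderiv]
  exact toDual_apply_apply

lemma descent (F : H → ℝ) (L : ℝ) (hL : 0 < L) (hdiff : Differentiable ℝ F)
    (hlip : LipschitzWith L.toNNReal (gradient F)) (x v : H) :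
    F (x + v) ≤ F x + ⟪gradient F x, v⟫_ℝ + L / 2 * ‖v‖ ^ 2 := by
  set ψ : ℝ → ℝ := fun t => F (x + t • v) - t * ⟪gradient F x, v⟫_ℝ - L * t ^ 2 / 2 * ‖v‖ ^ 2
    with hψ
  have hline : ∀ t : ℝ, HasDerivAt (fun t : ℝ => x + t • v) v t := fun t => by
    simpa using ((hasDerivAt_id t).smul_const v).const_add x
  have hd : ∀ t : ℝ, HasDerivAt ψ
      (⟪gradient F (x + t • v), v⟫_ℝ - ⟪gradient F x, v⟫_ℝ - L * t * ‖v‖ ^ 2) t := by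
    intro t
    have h1 : HasDerivAt (fun t : ℝ => F (x + t • v)) (fderiv ℝ F (x + t • v) v) t :=
      (hdiff (x + t • v)).hasFDerivAt.comp_hasDerivAt t (hline t)
    rw [fderiv_apply_eq_inner_gradient F hdiff] at h1
    have h2 : HasDerivAt (fun t : ℝ => t * ⟪gradient F x, v⟫_ℝ) (⟪gradient F x, v⟫_ℝ) t := by
      simpa using (hasDerivAt_id t).mul_const _
    have h3 : HasDerivAt (fun t : ℝ => L * t ^ 2 / 2 * ‖v‖ ^ 2) (L * t * ‖v‖ ^ 2) t := by
      have : HasDerivAt (fun t : ℝ => t ^ 2) (2 * t) t := by simpa using hasDerivAt_pow 2 t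
      have := ((this.const_mul L).div_const 2).mul_const (‖v‖ ^ 2)
      exact this.congr_deriv (by ring)
    exact (h1.sub h2).sub h3
  have hanti : AntitoneOn ψ (Set.Icc 0 1) := by
    apply antitoneOn_of_deriv_nonpos (convex_Icc 0 1)
    · exact (Continuous.continuousOn (by
        have hc := hdiff.continuous; rw [hψ]; fun_prop (disch := exact hdiff.continuous)) : ContinuousOn ψ _)
    · intro t _; exact ((hd t).differentiableAt).differentiableWithinAt
    · intro t ht
      rw [interior_Icc] at ht
      rw [(hd t).deriv]
      have hle : ⟪gradient F (x + t • v) - gradient F x, v⟫_ℝ ≤ L * t * ‖v‖ ^ 2 := by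
        calc ⟪gradient F (x + t • v) - gradient F x, v⟫_ℝ
            ≤ ‖gradient F (x + t • v) - gradient F x‖ * ‖v‖ := real_inner_le_norm _ _
          _ ≤ (L * ‖t • v‖) * ‖v‖ := by
              apply mul_le_mul_of_nonneg_right _ (norm_nonneg v)
              have := hlip.dist_le_mul (x + t • v) x
              simp only [dist_eq_norm, Real.coe_toNNReal _ hL.le] at this
              simpa using this
          _ = L * t * ‖v‖ ^ 2 := by
              rw [norm_smul, Real.norm_eq_abs, abs_of_pos ht.1]; ring
      rw [inner_sub_left] at hle
      linarith
  have := hanti (Set.left_mem_Icc.2 zero_le_one) (Set.right_mem_Icc.2 zero_le_one) zero_le_one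
  simp only [hψ, one_smul, zero_smul, add_zero, one_pow, one_mul, zero_mul, zero_pow,
    mul_zero, zero_div, sub_zero] at this
  linarith

theorem stmt13' (n E : ℕ) (hn : 0 < n)
    (F : EuclideanSpace ℝ (Fin E) → ℝ) (L : ℝ) (hL : 0 < L)
    (hdiff : Differentiable ℝ F)
    (hlip : LipschitzWith L.toNNReal (gradient F))
    (S : Fin n → Finset (Fin E))
    (hne : ∀ i, (S i).Nonempty)
    (htwo : ∀ ℓ : Fin E, (Finset.univ.filter (fun i => ℓ ∈ S i)).card = 2)
    (lam : EuclideanSpace ℝ (Fin E))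
    (ℓsel : Fin n → Fin E)
    (hsel : ∀ i, ℓsel i ∈ S i ∧
      ∀ m ∈ S i, (gradient F lam m) ^ 2 ≤ (gradient F lam (ℓsel i)) ^ 2) :
    (1 / (n : ℝ)) * ∑ i, F (lam -
        ((1 / L) * gradient F lam (ℓsel i)) • EuclideanSpace.single (ℓsel i) (1 : ℝ)) ≤
      F lam - (1 / (2 * L * n)) *
        ∑ i, sSup ((fun ℓ => (gradient F lam ℓ) ^ 2) '' (S i : Set (Fin E))) := by
  set g := gradient F lam with hg
  have hsup : ∀ i, sSup ((fun ℓ => (g ℓ) ^ 2) '' (S i : Set (Fin E))) = (g (ℓsel i)) ^ 2 := by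
    intro i
    apply le_antisymm
    · apply csSup_le (((hne i).to_set).image _)
      rintro _ ⟨m, hm, rfl⟩
      exact (hsel i).2 m hm
    · exact le_csSup (((S i : Set (Fin E)).toFinite.image _).bddAbove)
        ⟨ℓsel i, (hsel i).1, rfl⟩
  have hstep : ∀ i, F (lam - ((1 / L) * g (ℓsel i)) • EuclideanSpace.single (ℓsel i) (1 : ℝ))
      ≤ F lam - (g (ℓsel i)) ^ 2 / (2 * L) := by
    intro i
    set v : EuclideanSpace ℝ (Fin E) :=
      -(((1 / L) * g (ℓsel i)) • EuclideanSpace.single (ℓsel i) (1 : ℝ)) with hv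
    have h := descent F L hL hdiff hlip lam v
    rw [sub_eq_add_neg, ← hv]
    have hinner : ⟪g, v⟫_ℝ = -((1 / L) * (g (ℓsel i)) ^ 2) := by
      rw [hv, inner_neg_right, real_inner_smul_right, EuclideanSpace.inner_single_right]
      simp [hg]; ring
    have hnorm : ‖v‖ ^ 2 = ((1 / L) * g (ℓsel i)) ^ 2 := by
      rw [hv, norm_neg, norm_smul, EuclideanSpace.norm_single]
      simp [mul_pow, sq_abs]
    rw [hinner, hnorm] at h
    calc F (lam + v) ≤ F lam + -((1 / L) * g (ℓsel i) ^ 2)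
        + L / 2 * ((1 / L) * g (ℓsel i)) ^ 2 := h
      _ = F lam - (g (ℓsel i)) ^ 2 / (2 * L) := by field_simp; ring
  have hsum : ∑ i, F (lam - ((1 / L) * g (ℓsel i)) • EuclideanSpace.single (ℓsel i) (1 : ℝ))
      ≤ ∑ i, (F lam - (g (ℓsel i)) ^ 2 / (2 * L)) :=
    Finset.sum_le_sum fun i _ => hstep i
  have hnpos : (0 : ℝ) < n := Nat.cast_pos.2 hn
  calc (1 / (n : ℝ)) * ∑ i, F (lam - ((1 / L) * g (ℓsel i)) •
        EuclideanSpace.single (ℓsel i) (1 : ℝ))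
      ≤ (1 / (n : ℝ)) * ∑ i, (F lam - (g (ℓsel i)) ^ 2 / (2 * L)) := by
        apply mul_le_mul_of_nonneg_left hsum (by positivity)
    _ = F lam - (1 / (2 * L * n)) * ∑ i, (g (ℓsel i)) ^ 2 := by
        rw [Finset.sum_sub_distrib, Finset.sum_const, Finset.card_univ, Fintype.card_fin,
          ← Finset.sum_div]
        field_simp
        ring
    _ = F lam - (1 / (2 * L * n)) *
        ∑ i, sSup ((fun ℓ => (g ℓ) ^ 2) '' (S i : Set (Fin E))) := by
        congr 1
        congr 1
        exact (Finset.sum_congr rfl fun i _ => (hsup i).symm)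


/-- Expected progress of one step of set-wise Gauss-Southwell coordinate
descent (SGS-CD) on an `L`-smooth function: the activated set `i` updates a coordinate
`ℓsel i ∈ S i` with largest squared gradient component. -/
theorem stmt13 (n E : ℕ) (hn : 0 < n)
    (F : EuclideanSpace ℝ (Fin E) → ℝ) (L : ℝ) (hL : 0 < L)
    (hdiff : Differentiable ℝ F)
    (hlip : LipschitzWith L.toNNReal (gradient F))
    (S : Fin n → Finset (Fin E))
    (hne : ∀ i, (S i).Nonempty)
    (htwo : ∀ ℓ : Fin E, (Finset.univ.filter (fun i => ℓ ∈ S i)).card = 2)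
    (lam : EuclideanSpace ℝ (Fin E))
    (ℓsel : Fin n → Fin E)
    (hsel : ∀ i, ℓsel i ∈ S i ∧
      ∀ m ∈ S i, (gradient F lam m) ^ 2 ≤ (gradient F lam (ℓsel i)) ^ 2) :
    (1 / (n : ℝ)) * ∑ i, F (lam -
        ((1 / L) * gradient F lam (ℓsel i)) • EuclideanSpace.single (ℓsel i) (1 : ℝ)) ≤
      F lam - (1 / (2 * L * n)) *
        ∑ i, sSup ((fun ℓ => (gradient F lam ℓ) ^ 2) '' (S i : Set (Fin E))) := by
  exact stmt13' n E hn F L hL hdiff hlip S hne htwo lam ℓsel hsel
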